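/- Let Ω be a nonempty subset of ℝ^n, let L_0, …, L_m : ℝ^n → ℝ, let a ∈ ℝ^{m+1} satisfy a_i < L_i(x) for all x ∈ Ω and all i, let ε > 0, and let k ∈ ℝ^{m+1} satisfy k_i > 0 for all i. If x* ∈ Ω minimizes over Ω the modified weighted Chebyshev objective ψ_{k,ε}(x) = max_{0≤i≤m} k_i [ (L_i(x) − a_i) + ε Σ_{j=0}^m (L_j(x) − a_j) ], then x* is properly Pareto optimal in the sense of Geoffrion. -/
import Mathlib


/-- A minimizer over `Ω` of the modified weighted Chebyshev
objective `ψ_{k,ε}(x) = max_i k_i [(L_i(x) - a_i) + ε ∑_j (L_j(x) - a_j)]`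
with `ε > 0` and `k_i > 0` is properly Pareto optimal in the sense of
Geoffrion. -/
theorem modifiedWeightedChebyshev_minimizer_properlyParetoOptimal
    (n m : ℕ) (Ω : Set (Fin n → ℝ))
    (L : Fin (m + 1) → (Fin n → ℝ) → ℝ)
    (a k : Fin (m + 1) → ℝ) (ε : ℝ)
    (hΩ : Ω.Nonempty)
    (ha : ∀ x ∈ Ω, ∀ i, a i < L i x)
    (hε : 0 < ε) (hk : ∀ i, 0 < k i)
    (xstar : Fin n → ℝ) (hxstar : xstar ∈ Ω)
    (hmin : ∀ x ∈ Ω,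
      Finset.univ.sup' Finset.univ_nonempty
          (fun i => k i * ((L i xstar - a i) + ε * ∑ j, (L j xstar - a j))) ≤
        Finset.univ.sup' Finset.univ_nonempty
          (fun i => k i * ((L i x - a i) + ε * ∑ j, (L j x - a j)))) :
    (¬ ∃ x' ∈ Ω, (∀ i, L i x' ≤ L i xstar) ∧ ∃ j, L j x' < L j xstar) ∧
      ∃ M > (0 : ℝ), ∀ i, ∀ x' ∈ Ω, L i x' < L i xstar →
        ∃ j, L j xstar < L j x' ∧
          (L i xstar - L i x') / (L j x' - L j xstar) ≤ M := by
  constructor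
  · rintro ⟨x', hx', hle, j0, hlt⟩
    have hS : (∑ j, (L j x' - a j)) < ∑ j, (L j xstar - a j) := by
      apply Finset.sum_lt_sum
      · intro i _; have := hle i; linarith
      · exact ⟨j0, Finset.mem_univ _, by linarith⟩
    have hcon :
        (Finset.univ.sup' Finset.univ_nonempty
          (fun i => k i * ((L i x' - a i) + ε * ∑ j, (L j x' - a j)))) <
        Finset.univ.sup' Finset.univ_nonempty
          (fun i => k i * ((L i xstar - a i) + ε * ∑ j, (L j xstar - a j))) := by
      rw [Finset.sup'_lt_iff]
      intro i _
      have h1 : k i * ((L i x' - a i) + ε * ∑ j, (L j x' - a j)) <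
          k i * ((L i xstar - a i) + ε * ∑ j, (L j xstar - a j)) := by
        apply mul_lt_mul_of_pos_left _ (hk i)
        have := hle i
        nlinarith
      exact lt_of_lt_of_le h1 (Finset.le_sup'
        (fun i => k i * ((L i xstar - a i) + ε * ∑ j, (L j xstar - a j)))
        (Finset.mem_univ i))
    exact absurd (hmin x' hx') (not_le.mpr hcon)
  · refine ⟨(m : ℝ) + 1 / ε, by positivity, ?_⟩
    intro i0 x' hx' hlt
    obtain ⟨jm, _, hjm⟩ := Finset.exists_mem_eq_sup' (Finset.univ_nonempty)
      (fun j : Fin (m + 1) => L j x' - L j xstar)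
    set t := Finset.univ.sup' Finset.univ_nonempty
      (fun j : Fin (m + 1) => L j x' - L j xstar) with htdef
    obtain ⟨p, _, hp⟩ := Finset.exists_mem_eq_sup' (Finset.univ_nonempty)
      (fun i => k i * ((L i x' - a i) + ε * ∑ j, (L j x' - a j)))
    -- minimality at index p
    have h1 : k p * ((L p xstar - a p) + ε * ∑ j, (L j xstar - a j)) ≤
        k p * ((L p x' - a p) + ε * ∑ j, (L j x' - a j)) := by
      calc k p * ((L p xstar - a p) + ε * ∑ j, (L j xstar - a j))
          ≤ Finset.univ.sup' Finset.univ_nonempty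
            (fun i => k i * ((L i xstar - a i) + ε * ∑ j, (L j xstar - a j))) :=
            Finset.le_sup'
              (fun i => k i * ((L i xstar - a i) + ε * ∑ j, (L j xstar - a j)))
              (Finset.mem_univ p)
        _ ≤ Finset.univ.sup' Finset.univ_nonempty
            (fun i => k i * ((L i x' - a i) + ε * ∑ j, (L j x' - a j))) := hmin x' hx'
        _ = _ := hp
    have h2 : (L p xstar - a p) + ε * ∑ j, (L j xstar - a j) ≤
        (L p x' - a p) + ε * ∑ j, (L j x' - a j) :=
      le_of_mul_le_mul_left h1 (hk p)
    have h4 : L p x' - L p xstar ≤ t :=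
      Finset.le_sup' (fun j : Fin (m + 1) => L j x' - L j xstar) (Finset.mem_univ p)
    have h3 : ε * ((∑ j, (L j xstar - a j)) - ∑ j, (L j x' - a j)) ≤ t := by
      nlinarith
    -- sum decomposition bound
    have hsplit : ∑ j ∈ Finset.univ.erase i0, (L j x' - L j xstar) +
        (L i0 x' - L i0 xstar) = ∑ j, (L j x' - L j xstar) :=
      Finset.sum_erase_add _ _ (Finset.mem_univ i0)
    have hcard : (Finset.univ.erase i0).card = m := by
      rw [Finset.card_erase_of_mem (Finset.mem_univ i0), Finset.card_univ,
        Fintype.card_fin]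
      omega
    have hb : ∑ j ∈ Finset.univ.erase i0, (L j x' - L j xstar) ≤ (m : ℝ) * t := by
      have := Finset.sum_le_card_nsmul (Finset.univ.erase i0)
        (fun j => L j x' - L j xstar) t
        (fun j _ => Finset.le_sup' (fun j : Fin (m + 1) => L j x' - L j xstar)
          (Finset.mem_univ j))
      rw [hcard] at this
      simpa [nsmul_eq_mul] using this
    have hsub : (∑ j, (L j x' - a j)) - ∑ j, (L j xstar - a j) =
        ∑ j, (L j x' - L j xstar) := by
      rw [← Finset.sum_sub_distrib]; ring_nf
    have hd : L i0 xstar - L i0 x' ≤ t * ((m : ℝ) + 1 / ε) := by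
      have hSdiff : (∑ j, (L j xstar - a j)) - ∑ j, (L j x' - a j) ≥
          (L i0 xstar - L i0 x') - (m : ℝ) * t := by
        have : ∑ j, (L j x' - L j xstar) ≤ (m : ℝ) * t - (L i0 xstar - L i0 x') := by
          rw [← hsplit]; linarith
        linarith [hsub ▸ this]
      have hSle : (∑ j, (L j xstar - a j)) - ∑ j, (L j x' - a j) ≤ t / ε := by
        rw [le_div_iff₀ hε]; nlinarith
      have : (L i0 xstar - L i0 x') - (m : ℝ) * t ≤ t / ε := le_trans hSdiff hSle
      have htε : t / ε = t * (1 / ε) := by ring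
      nlinarith
    have htpos : 0 < t := by
      by_contra h
      push_neg at h
      have hM : (0 : ℝ) < (m : ℝ) + 1 / ε := by positivity
      nlinarith
    refine ⟨jm, by rw [hjm] at htpos; linarith, ?_⟩
    rw [← hjm, div_le_iff₀ htpos]
    nlinarith
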